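/- The polynomial x⁴ + 1 ∈ ℚ[x] is 2-superirreducible over ℚ: it is irreducible in ℚ[x], and for every nonconstant polynomial g ∈ ℚ[x] of degree at most 2, the composition (x⁴+1)∘g is irreducible in ℚ[x]. -/

import Mathlib

open Polynomial

/-- A polynomial `f ∈ R[x]` is `k`-superirreducible over `R` if it is irreducible and
`f(g(x))` is irreducible for every nonconstant `g ∈ R[x]` of degree at most `k`. -/
def IsSuperirreducible (R : Type*) [CommRing R] [IsDomain R] (k : ℕ) (f : Polynomial R) : Prop :=
  Irreducible f ∧ ∀ g : Polynomial R, 0 < g.natDegree → g.natDegree ≤ k →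
    Irreducible (f.comp g)

open IntermediateField Module

private lemma no_rat_sqrt2 {q u : ℚ} (hq : q ≠ 0) (h : q ^ 2 = 2 * u ^ 2) : False := by
  have hu : u ≠ 0 := by
    rintro rfl
    have h0 : q ^ 2 = 0 := by linarith
    exact hq (pow_eq_zero_iff (two_ne_zero) |>.mp h0)
  have ht : ((q / u : ℚ) : ℝ) ^ 2 = 2 := by
    have : (q / u) ^ 2 = 2 := by field_simp; linarith
    exact_mod_cast this
  have h3 : Real.sqrt 2 = |((q / u : ℚ) : ℝ)| := by
    rw [← ht, Real.sqrt_sq_eq_abs]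
  have h4 := irrational_sqrt_two
  rw [h3, ← Rat.cast_abs] at h4
  exact Rat.not_irrational _ h4

private lemma fermat_rat {e q N : ℚ} (h : e ^ 4 + q ^ 4 = N ^ 2) (hq : q ≠ 0) : e = 0 := by
  by_contra he
  have hnum : ∀ r : ℚ, (r.num : ℚ) = r * r.den := by
    intro r
    have hden : ((r.den : ℚ)) ≠ 0 := by exact_mod_cast r.den_ne_zero
    have h2 := div_mul_cancel₀ (r.num : ℚ) hden
    rw [Rat.num_div_den] at h2
    exact h2.symm
  set m : ℚ := (e.den : ℚ) * (q.den : ℚ) * (N.den : ℚ) with hm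
  have hE : ((e.num * (q.den * N.den) : ℤ) : ℚ) = e * m := by push_cast; rw [hnum e]; ring
  have hQ : ((q.num * (e.den * N.den) : ℤ) : ℚ) = q * m := by push_cast; rw [hnum q]; ring
  have hC : ((N.num * (e.den ^ 2 * q.den ^ 2 * N.den) : ℤ) : ℚ) = N * m ^ 2 := by
    push_cast; rw [hnum N]; ring
  have key : ((e.num * (q.den * N.den) : ℤ) : ℚ) ^ 4 + ((q.num * (e.den * N.den) : ℤ) : ℚ) ^ 4
      = ((N.num * (e.den ^ 2 * q.den ^ 2 * N.den) : ℤ) : ℚ) ^ 2 := by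
    rw [hE, hQ, hC]
    linear_combination m ^ 4 * h
  have keyZ : (e.num * (q.den * N.den)) ^ 4 + (q.num * (e.den * N.den)) ^ 4
      = (N.num * (e.den ^ 2 * q.den ^ 2 * N.den)) ^ 2 := by exact_mod_cast key
  have hE0 : e.num * (q.den * N.den) ≠ 0 :=
    mul_ne_zero (Rat.num_ne_zero.mpr he) (by positivity)
  have hQ0 : q.num * (e.den * N.den) ≠ 0 :=
    mul_ne_zero (Rat.num_ne_zero.mpr hq) (by positivity)
  exact not_fermat_42 hE0 hQ0 keyZ


private lemma lemD {x0 x1 x2 x3 q : ℚ} (hA : 2*x0*x2 + x1^2 - x3^2 = 0)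
    (hB : x0*x3 + x1*x2 = 0) (hq : 2*(x0*x1 - x2*x3) = q) (hq0 : q ≠ 0) : False := by
  subst hq
  set e0 := x0^2 - 2*x1*x3 - x2^2 with he0
  set u := x0^2 - x2^2 + 2*x1*x3 with hu
  set v := 2*x0*x2 - x1^2 + x3^2 with hv
  have h1 : u^2 - v^2 = e0^2 := by
    rw [hu, hv, he0]
    linear_combination (-(2*x0*x2 + x1^2 - x3^2))*hA + (8*(x0*x1 - x2*x3))*hB
  have h2 : 2*(u*v) = -(2*(x0*x1 - x2*x3))^2 := by
    rw [hu, hv]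
    linear_combination (2*(x0^2 - 2*x1*x3 - x2^2))*hA + (4*(x0*x3 + x1*x2))*hB
  have hN : e0^4 + (2*(x0*x1 - x2*x3))^4 = (u^2 + v^2)^2 := by
    linear_combination (v^2 - u^2 - e0^2)*h1 + ((2*(x0*x1 - x2*x3))^2 - 2*u*v)*h2
  have he00 : e0 = 0 := fermat_rat hN hq0
  rw [he00] at h1
  have h4 : ((2*(x0*x1 - x2*x3))^2 - 2*u^2) * ((2*(x0*x1 - x2*x3))^2 + 2*u^2) = 0 := by
    linear_combination ((2*(x0*x1 - x2*x3))^2 - 2*u*v)*h2 + (-4*u^2)*h1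
  have hq2 : 0 < (2*(x0*x1 - x2*x3))^2 :=
    lt_of_le_of_ne (sq_nonneg _) (Ne.symm (pow_ne_zero 2 hq0))
  have h5 : (2*(x0*x1 - x2*x3))^2 + 2*u^2 ≠ 0 := by nlinarith [sq_nonneg u]
  have h6 : (2*(x0*x1 - x2*x3))^2 = 2*u^2 := by
    rcases mul_eq_zero.mp h4 with h | h
    · linarith
    · exact absurd h h5
  exact no_rat_sqrt2 hq0 h6

private lemma X4_irred : Irreducible (X ^ 4 + 1 : ℚ[X]) := by
  have h4 : Polynomial.cyclotomic 4 ℚ = X ^ 2 + 1 := by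
    have h := Polynomial.cyclotomic_expand_eq_cyclotomic Nat.prime_two (dvd_refl 2) ℚ
    rw [Polynomial.cyclotomic_two] at h
    rw [show (4 : ℕ) = 2 * 2 by norm_num, ← h]
    simp [Polynomial.expand_X]
  have h8 : Polynomial.cyclotomic 8 ℚ = X ^ 4 + 1 := by
    have h := Polynomial.cyclotomic_expand_eq_cyclotomic Nat.prime_two
      (show (2:ℕ) ∣ 4 by norm_num) ℚ
    rw [h4] at h
    rw [show (8 : ℕ) = 4 * 2 by norm_num, ← h]
    simp [Polynomial.expand_X, pow_mul]
    ring_nf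
  rw [← h8]
  exact Polynomial.cyclotomic.irreducible_rat (by norm_num)


private lemma X4_monic : (X ^ 4 + 1 : ℚ[X]).Monic := by
  have := Polynomial.monic_X_pow_add_C (1 : ℚ) (show (4:ℕ) ≠ 0 by norm_num)
  simpa using this

private lemma X4_natDegree : (X ^ 4 + 1 : ℚ[X]).natDegree = 4 := by
  compute_degree!

-- root setup
private lemma exists_root_facts {D g : ℚ[X]} (hdvd : D ∣ (X ^ 4 + 1 : ℚ[X]).comp g)
    (hpos : 0 < D.natDegree) :
    ∃ α : ℂ, aeval α D = 0 ∧ (aeval α g) ^ 4 = -1 := by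
  have hD0 : D ≠ 0 := fun h => by simp [h] at hpos
  have hdeg : 0 < (D.map (algebraMap ℚ ℂ)).degree := by
    rw [degree_map_eq_of_injective (algebraMap ℚ ℂ).injective]
    exact natDegree_pos_iff_degree_pos.mp hpos
  obtain ⟨α, hα⟩ := Complex.exists_root hdeg
  have hroot : aeval α D = 0 := by
    rwa [Polynomial.aeval_def, ← Polynomial.eval_map]
  refine ⟨α, hroot, ?_⟩
  obtain ⟨E, hE⟩ := hdvd
  have hFroot : aeval α ((X ^ 4 + 1 : ℚ[X]).comp g) = 0 := by
    rw [hE, map_mul, hroot, zero_mul]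
  rw [Polynomial.aeval_comp] at hFroot
  simp only [map_add, map_pow, aeval_X, map_one] at hFroot
  linear_combination hFroot

private lemma minpoly_of_pow4 {ζ : ℂ} (hζ : ζ ^ 4 = -1) : minpoly ℚ ζ = X ^ 4 + 1 :=
  (minpoly.eq_of_irreducible_of_monic X4_irred
    (by simp only [map_add, map_pow, aeval_X, map_one, hζ]; ring) X4_monic).symm

private lemma integral_of_pow4 {ζ : ℂ} (hζ : ζ ^ 4 = -1) : IsIntegral ℚ ζ :=
  ⟨X ^ 4 + 1, X4_monic, by simp only [eval₂_add, eval₂_pow, eval₂_X, eval₂_one, hζ]; ring⟩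

private lemma key_deg {g : ℚ[X]} {D : ℚ[X]} (hdvd : D ∣ (X ^ 4 + 1 : ℚ[X]).comp g)
    (hpos : 0 < D.natDegree) : 4 ≤ D.natDegree := by
  have hD0 : D ≠ 0 := fun h => by simp [h] at hpos
  obtain ⟨α, hroot, hζ⟩ := exists_root_facts hdvd hpos
  have hαint : IsIntegral ℚ α := IsAlgebraic.isIntegral ⟨D, hD0, hroot⟩
  have hfd : FiniteDimensional ℚ ℚ⟮α⟯ := IntermediateField.adjoin.finiteDimensional hαint
  set gen := IntermediateField.AdjoinSimple.gen ℚ α with hgen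
  have hcast : algebraMap ℚ⟮α⟯ ℂ (aeval gen g) = aeval α g := by
    have h1 := Polynomial.aeval_algHom_apply (IsScalarTower.toAlgHom ℚ ℚ⟮α⟯ ℂ) gen g
    rw [IsScalarTower.coe_toAlgHom'] at h1
    rw [← h1, IntermediateField.AdjoinSimple.algebraMap_gen]
  have hmin : minpoly ℚ (aeval gen g) = X ^ 4 + 1 := by
    rw [← minpoly.algebraMap_eq (algebraMap ℚ⟮α⟯ ℂ).injective, hcast]
    exact minpoly_of_pow4 hζ
  calc 4 = (minpoly ℚ (aeval gen g)).natDegree := by rw [hmin, X4_natDegree]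
    _ ≤ finrank ℚ ℚ⟮α⟯ := minpoly.natDegree_le _
    _ = (minpoly ℚ α).natDegree := IntermediateField.adjoin.finrank hαint
    _ ≤ D.natDegree := natDegree_le_of_dvd (minpoly.dvd ℚ α hroot) hD0


private lemma no_deg4_factor {g : ℚ[X]} (hg : g.natDegree = 2) {A : ℚ[X]}
    (hdvd : A ∣ (X ^ 4 + 1 : ℚ[X]).comp g) (hA4 : A.natDegree = 4) : False := by
  have hApos : 0 < A.natDegree := by omega
  have hA0 : A ≠ 0 := fun h => by simp [h] at hApos
  obtain ⟨α, hroot, hζ4⟩ := exists_root_facts hdvd hApos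
  set ζ : ℂ := aeval α g with hζdef
  have hαint : IsIntegral ℚ α := IsAlgebraic.isIntegral ⟨A, hA0, hroot⟩
  have hζint : IsIntegral ℚ ζ := integral_of_pow4 hζ4
  have hfd : FiniteDimensional ℚ ℚ⟮α⟯ := IntermediateField.adjoin.finiteDimensional hαint
  -- minpoly α has degree 4
  have hmindvd : minpoly ℚ α ∣ A := minpoly.dvd ℚ α hroot
  have hminpos : 0 < (minpoly ℚ α).natDegree := minpoly.natDegree_pos hαint
  have hmin4 : (minpoly ℚ α).natDegree = 4 := by
    have h1 : 4 ≤ (minpoly ℚ α).natDegree := key_deg (hmindvd.trans hdvd) hminpos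
    have h2 : (minpoly ℚ α).natDegree ≤ 4 := hA4 ▸ natDegree_le_of_dvd hmindvd hA0
    omega
  have hfinα : finrank ℚ ℚ⟮α⟯ = 4 := (IntermediateField.adjoin.finrank hαint).trans hmin4
  -- ζ ∈ ℚ⟮α⟯
  set gen := IntermediateField.AdjoinSimple.gen ℚ α with hgen
  have hcast : algebraMap ℚ⟮α⟯ ℂ (aeval gen g) = ζ := by
    have h1 := Polynomial.aeval_algHom_apply (IsScalarTower.toAlgHom ℚ ℚ⟮α⟯ ℂ) gen g
    rw [IsScalarTower.coe_toAlgHom'] at h1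
    rw [← h1, IntermediateField.AdjoinSimple.algebraMap_gen]
  have hζmem : ζ ∈ ℚ⟮α⟯ := hcast ▸ (aeval gen g).2
  have hle : ℚ⟮ζ⟯ ≤ ℚ⟮α⟯ := IntermediateField.adjoin_simple_le_iff.mpr hζmem
  have hfinζ : finrank ℚ ℚ⟮ζ⟯ = 4 := by
    rw [IntermediateField.adjoin.finrank hζint, minpoly_of_pow4 hζ4, X4_natDegree]
  have heq : ℚ⟮ζ⟯ = ℚ⟮α⟯ :=
    IntermediateField.eq_of_le_of_finrank_eq hle (by rw [hfinζ, hfinα])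
  have hαmem : α ∈ ℚ⟮ζ⟯ := heq ▸ IntermediateField.mem_adjoin_simple_self ℚ α
  -- coordinates
  obtain ⟨p, hp⟩ : ∃ p : ℚ[X], aeval ζ p = α := by
    have h1 : α ∈ Algebra.adjoin ℚ {ζ} := by
      rw [← IntermediateField.adjoin_simple_toSubalgebra_of_isAlgebraic hζint.isAlgebraic]
      exact hαmem
    rw [Algebra.adjoin_singleton_eq_range_aeval] at h1
    exact h1
  set Rm := p %ₘ (X ^ 4 + 1) with hRm
  have hαR : aeval ζ Rm = α := by
    conv_rhs => rw [← hp, ← Polynomial.modByMonic_add_div p (X ^ 4 + 1)]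
    simp only [map_add, map_mul, map_pow, map_one, aeval_X, hζ4]
    ring
  have hdegR : Rm.natDegree < 4 := by
    have h1 := Polynomial.degree_modByMonic_lt p X4_monic
    rcases eq_or_ne Rm 0 with h | h
    · rw [h]; simp
    · have h2 : ((X:ℚ[X]) ^ 4 + 1).degree = ((4:ℕ) : WithBot ℕ) := by
        rw [Polynomial.degree_eq_natDegree (X4_monic.ne_zero), X4_natDegree]
      rw [Polynomial.degree_eq_natDegree h, h2] at h1
      exact_mod_cast h1
  set x0 := Rm.coeff 0 with hx0
  set x1 := Rm.coeff 1 with hx1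
  set x2 := Rm.coeff 2 with hx2
  set x3 := Rm.coeff 3 with hx3
  have hαx : α = (x0:ℂ) + x1*ζ + x2*ζ^2 + x3*ζ^3 := by
    rw [← hαR, Polynomial.aeval_eq_sum_range' hdegR]
    simp [Finset.sum_range_succ, Algebra.smul_def]
    rfl
  -- g coefficients
  set a := g.coeff 2 with ha'
  set b := g.coeff 1 with hb'
  set c := g.coeff 0 with hc'
  have hg0 : g ≠ 0 := fun h => by simp [h] at hg
  have ha : a ≠ 0 := by
    have h1 : g.leadingCoeff ≠ 0 := fun h => hg0 (Polynomial.leadingCoeff_eq_zero.mp h)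
    rwa [Polynomial.leadingCoeff, hg] at h1
  have hg3 : g.natDegree < 3 := by omega
  have hgval : ζ = (a:ℂ)*α^2 + (b:ℂ)*α + (c:ℂ) := by
    rw [hζdef, Polynomial.aeval_eq_sum_range' hg3]
    simp [Finset.sum_range_succ, Algebra.smul_def]
    ring
  rw [hαx] at hgval
  -- reduce modulo ζ^4 = -1 to a rational linear combination of 1, ζ, ζ², ζ³
  have hcomb : ((a*(x0^2 - x2^2 - 2*x1*x3) + b*x0 + c : ℚ) : ℂ)
      + ((a*(2*x0*x1 - 2*x2*x3) + b*x1 - 1 : ℚ) : ℂ) * ζ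
      + ((a*(x1^2 - x3^2 + 2*x0*x2) + b*x2 : ℚ) : ℂ) * ζ^2
      + ((a*(2*x0*x3 + 2*x1*x2) + b*x3 : ℚ) : ℂ) * ζ^3 = 0 := by
    push_cast
    linear_combination (-1 : ℂ) * hgval +
      (-((a:ℂ)*(x2^2 + 2*x1*x3)) - (2*(a:ℂ)*x2*x3)*ζ - ((a:ℂ)*x3^2)*ζ^2) * hζ4
  -- linear independence of 1, ζ, ζ², ζ³ over ℚ
  have hind : ∀ c0 c1 c2 c3 : ℚ, ((c0:ℂ) + (c1:ℂ)*ζ + (c2:ℂ)*ζ^2 + (c3:ℂ)*ζ^3 = 0) →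
      c0 = 0 ∧ c1 = 0 ∧ c2 = 0 ∧ c3 = 0 := by
    intro c0 c1 c2 c3 hcc
    set P : ℚ[X] := C c0 + C c1 * X + C c2 * X^2 + C c3 * X^3 with hP
    have hPz : aeval ζ P = 0 := by
      rw [hP]
      simp only [map_add, map_mul, map_pow, aeval_C, aeval_X]
      convert hcc using 2 <;> simp [Algebra.smul_def]
    have hP0 : P = 0 := by
      by_contra hne
      have h4le := Polynomial.natDegree_le_of_dvd (minpoly.dvd ℚ ζ hPz) hne
      rw [minpoly_of_pow4 hζ4, X4_natDegree] at h4le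
      have h3 : P.natDegree ≤ 3 := by rw [hP]; compute_degree
      omega
    have hco : ∀ n, P.coeff n = 0 := fun n => by rw [hP0]; simp
    have e0 := hco 0; have e1 := hco 1; have e2 := hco 2; have e3 := hco 3
    rw [hP] at e0 e1 e2 e3
    simp [Polynomial.coeff_add, Polynomial.coeff_C_mul, Polynomial.coeff_X_pow,
      Polynomial.coeff_C, Polynomial.coeff_X] at e0 e1 e2 e3
    exact ⟨e0, e1, e2, e3⟩
  obtain ⟨-, hk1, hk2, hk3⟩ := hind _ _ _ _ hcomb
  set y0 : ℚ := x0 + b/(2*a) with hy0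
  have e1 : 2*(y0*x1 - x2*x3) = 1/a := by
    rw [hy0]; field_simp [ha]; linear_combination hk1
  have e2 : 2*y0*x2 + x1^2 - x3^2 = 0 := by
    have h : a * (2*y0*x2 + x1^2 - x3^2) = 0 := by
      rw [hy0]; field_simp [ha]; linear_combination hk2
    exact (mul_eq_zero.mp h).resolve_left ha
  have e3 : y0*x3 + x1*x2 = 0 := by
    have h : a * (y0*x3 + x1*x2) = 0 := by
      rw [hy0]; field_simp [ha]; linear_combination hk3
    exact (mul_eq_zero.mp h).resolve_left ha
  exact lemD e2 e3 e1 (one_div_ne_zero ha)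


private lemma nonunit_deg {A : ℚ[X]} (hA0 : A ≠ 0) (hA : ¬IsUnit A) : 0 < A.natDegree := by
  rcases Nat.eq_zero_or_pos A.natDegree with h | h
  · obtain ⟨c, rfl⟩ := Polynomial.natDegree_eq_zero.mp h
    exact absurd (Polynomial.isUnit_C.mpr (isUnit_iff_ne_zero.mpr
      (fun hc => hA0 (by rw [hc, map_zero])))) hA
  · exact h

private lemma comp_deg1 {g : ℚ[X]} (hg : g.natDegree = 1) :
    Irreducible ((X ^ 4 + 1 : ℚ[X]).comp g) := by
  set a := g.coeff 1 with ha'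
  set b := g.coeff 0 with hb'
  have hg0 : g ≠ 0 := fun h => by simp [h] at hg
  have ha : a ≠ 0 := by
    have h1 : g.leadingCoeff ≠ 0 := fun h => hg0 (Polynomial.leadingCoeff_eq_zero.mp h)
    rwa [Polynomial.leadingCoeff, hg] at h1
  have hgeq : g = C a * X + C b := Polynomial.eq_X_add_C_of_natDegree_le_one hg.le
  set ι : ℚ[X] := C a⁻¹ * (X - C b) with hι
  have hcomp : g.comp ι = X := by
    rw [hgeq, hι]
    simp only [add_comp, mul_comp, C_comp, X_comp]
    rw [← mul_assoc, ← C_mul, mul_inv_cancel₀ ha, C_1, one_mul]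
    ring
  have hι1 : ι.natDegree = 1 := by
    rw [hι, Polynomial.natDegree_C_mul (inv_ne_zero ha), Polynomial.natDegree_X_sub_C]
  have hF4 : ((X ^ 4 + 1 : ℚ[X]).comp g).natDegree = 4 := by
    rw [Polynomial.natDegree_comp, X4_natDegree, hg, mul_one]
  have hFne : (X ^ 4 + 1 : ℚ[X]).comp g ≠ 0 := fun h => by simp [h] at hF4
  rw [irreducible_iff]
  constructor
  · intro hu
    have := Polynomial.natDegree_eq_zero_of_isUnit hu
    omega
  intro A B h
  have hA0 : A ≠ 0 := fun hh => hFne (by rw [h, hh, zero_mul])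
  have hB0 : B ≠ 0 := fun hh => hFne (by rw [h, hh, mul_zero])
  have hf : (X ^ 4 + 1 : ℚ[X]) = (A.comp ι) * (B.comp ι) := by
    have h1 : ((X ^ 4 + 1 : ℚ[X]).comp g).comp ι = (X ^ 4 + 1 : ℚ[X]) := by
      rw [Polynomial.comp_assoc, hcomp, Polynomial.comp_X]
    rw [← h1, h, Polynomial.mul_comp]
  have hunit : ∀ D : ℚ[X], D ≠ 0 → IsUnit (D.comp ι) → IsUnit D := by
    intro D hD0 hu
    have h2 := Polynomial.natDegree_eq_zero_of_isUnit hu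
    rw [Polynomial.natDegree_comp, hι1, mul_one] at h2
    obtain ⟨c, rfl⟩ := Polynomial.natDegree_eq_zero.mp h2
    exact Polynomial.isUnit_C.mpr (isUnit_iff_ne_zero.mpr (fun hc => hD0 (by rw [hc, map_zero])))
  rcases X4_irred.isUnit_or_isUnit hf with h1 | h1
  · exact Or.inl (hunit A hA0 h1)
  · exact Or.inr (hunit B hB0 h1)

private lemma comp_deg2 {g : ℚ[X]} (hg : g.natDegree = 2) :
    Irreducible ((X ^ 4 + 1 : ℚ[X]).comp g) := by
  have hF8 : ((X ^ 4 + 1 : ℚ[X]).comp g).natDegree = 8 := by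
    rw [Polynomial.natDegree_comp, X4_natDegree, hg]
  have hFne : (X ^ 4 + 1 : ℚ[X]).comp g ≠ 0 := fun h => by simp [h] at hF8
  rw [irreducible_iff]
  constructor
  · intro hu
    have := Polynomial.natDegree_eq_zero_of_isUnit hu
    omega
  intro A B h
  by_contra hcon
  push_neg at hcon
  obtain ⟨hA, hB⟩ := hcon
  have hA0 : A ≠ 0 := fun hh => hFne (by rw [h, hh, zero_mul])
  have hB0 : B ≠ 0 := fun hh => hFne (by rw [h, hh, mul_zero])
  have hApos := nonunit_deg hA0 hA
  have hBpos := nonunit_deg hB0 hB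
  have hsum : A.natDegree + B.natDegree = 8 := by
    rw [← Polynomial.natDegree_mul hA0 hB0, ← h, hF8]
  have hAdvd : A ∣ (X ^ 4 + 1 : ℚ[X]).comp g := ⟨B, h⟩
  have hBdvd : B ∣ (X ^ 4 + 1 : ℚ[X]).comp g := ⟨A, by rw [h, mul_comm]⟩
  have h4A := key_deg hAdvd hApos
  have h4B := key_deg hBdvd hBpos
  exact no_deg4_factor hg hAdvd (by omega)
theorem x4_add_one_superirreducible :
    IsSuperirreducible ℚ 2 (X ^ 4 + 1) := by
  refine ⟨X4_irred, ?_⟩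
  intro g h1 h2
  have : g.natDegree = 1 ∨ g.natDegree = 2 := by omega
  rcases this with h | h
  · exact comp_deg1 h
  · exact comp_deg2 h
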